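/- arXiv:1303.4622 — 12 statements merged into one kernel-verified Lean document; each statement's English description precedes it below -/
import Mathlib

section
/- In the lower-triangular array setting, the derivative of the lower-triangular post-array block satisfies (L21)'(θ₀) = (𝓤ᵀ + 𝓓 + 𝓛) · L21(θ₀), where 𝓛, 𝓓, 𝓤 are the strictly lower-triangular, diagonal, and strictly upper-triangular parts of Y · L21(θ₀)⁻¹. -/
open Matrix

/-- Strictly lower-triangular part of a square matrix. -/
noncomputable def strictLowerPart {s : ℕ} (M : Matrix (Fin s) (Fin s) ℝ) :
    Matrix (Fin s) (Fin s) ℝ :=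
  Matrix.of fun i j => if j < i then M i j else 0

/-- Diagonal part of a square matrix. -/
noncomputable def diagPart {s : ℕ} (M : Matrix (Fin s) (Fin s) ℝ) :
    Matrix (Fin s) (Fin s) ℝ :=
  Matrix.of fun i j => if i = j then M i j else 0

/-- Strictly upper-triangular part of a square matrix. -/
noncomputable def strictUpperPart {s : ℕ} (M : Matrix (Fin s) (Fin s) ℝ) :
    Matrix (Fin s) (Fin s) ℝ :=
  Matrix.of fun i j => if i < j then M i j else 0

/-- Lower triangular array case: the derivative of the lower-triangular post-array block
satisfies `(L21)' = (𝓤ᵀ + 𝓓 + 𝓛) * L21`, where `𝓛, 𝓓, 𝓤` are the strictly lower-triangular,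
diagonal and strictly upper-triangular parts of `Y * L21⁻¹`. -/
theorem lowerTriangularCase_L21_deriv
    (s k l : ℕ) (hs : 0 < s)
    (A A' : ℝ → Matrix (Fin k ⊕ Fin s) (Fin s ⊕ Fin l) ℝ)
    (Q Q' : ℝ → Matrix (Fin k ⊕ Fin s) (Fin k ⊕ Fin s) ℝ)
    (hA : ∀ θ i j, HasDerivAt (fun t => A t i j) (A' θ i j) θ)
    (hQ : ∀ θ i j, HasDerivAt (fun t => Q t i j) (Q' θ i j) θ)
    (hQorth : ∀ θ, Q θ * (Q θ)ᵀ = 1)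
    (L12 : ℝ → Matrix (Fin k) (Fin l) ℝ)
    (L21 : ℝ → Matrix (Fin s) (Fin s) ℝ)
    (L22 : ℝ → Matrix (Fin s) (Fin l) ℝ)
    (hblock : ∀ θ, Q θ * A θ = Matrix.fromBlocks 0 (L12 θ) (L21 θ) (L22 θ))
    (hlow : ∀ θ (i j : Fin s), i < j → L21 θ i j = 0)
    (hinv : ∀ θ, IsUnit (L21 θ))
    (θ₀ : ℝ)
    (X : Matrix (Fin k) (Fin s) ℝ) (N : Matrix (Fin k) (Fin l) ℝ)
    (Y : Matrix (Fin s) (Fin s) ℝ) (V : Matrix (Fin s) (Fin l) ℝ)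
    (hXNYV : Q θ₀ * A' θ₀ = Matrix.fromBlocks X N Y V)
    (L21' : Matrix (Fin s) (Fin s) ℝ)
    (hL21' : ∀ i j, HasDerivAt (fun t => L21 t i j) (L21' i j) θ₀) :
    L21' = ((strictUpperPart (Y * (L21 θ₀)⁻¹))ᵀ + diagPart (Y * (L21 θ₀)⁻¹)
      + strictLowerPart (Y * (L21 θ₀)⁻¹)) * L21 θ₀ := by
  have hQtQ : (Q θ₀)ᵀ * Q θ₀ = 1 := mul_eq_one_comm.mp (hQorth θ₀)
  set S : Matrix (Fin k ⊕ Fin s) (Fin k ⊕ Fin s) ℝ := Q' θ₀ * (Q θ₀)ᵀ with hSdef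
  -- S is skew-symmetric
  have hskew : ∀ i j, S i j + S j i = 0 := by
    intro i j
    have h1 : HasDerivAt (fun t => ∑ m, Q t i m * Q t j m)
        (∑ m, (Q' θ₀ i m * Q θ₀ j m + Q θ₀ i m * Q' θ₀ j m)) θ₀ :=
      HasDerivAt.fun_sum fun m _ => (hQ θ₀ i m).mul (hQ θ₀ j m)
    have h2 : (fun t => ∑ m, Q t i m * Q t j m)
        = fun _ => (1 : Matrix (Fin k ⊕ Fin s) (Fin k ⊕ Fin s) ℝ) i j := by
      funext t
      have := congrArg (fun M => M i j) (hQorth t)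
      simpa [Matrix.mul_apply] using this
    rw [h2] at h1
    have h0 : (∑ m, (Q' θ₀ i m * Q θ₀ j m + Q θ₀ i m * Q' θ₀ j m)) = 0 :=
      h1.unique (hasDerivAt_const θ₀ _)
    have hSij : S i j = ∑ m, Q' θ₀ i m * Q θ₀ j m := by
      simp [hSdef, Matrix.mul_apply]
    have hSji : S j i = ∑ m, Q θ₀ i m * Q' θ₀ j m := by
      simp [hSdef, Matrix.mul_apply, mul_comm]
    rw [hSij, hSji, ← Finset.sum_add_distrib]
    exact h0
  -- derivative of (Q*A) at bottom-left entries equals L21'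
  have hderivQA : ∀ (i j : Fin s),
      (Q' θ₀ * A θ₀ + Q θ₀ * A' θ₀) (Sum.inr i) (Sum.inl j) = L21' i j := by
    intro i j
    have h1 : HasDerivAt (fun t => ∑ m, Q t (Sum.inr i) m * A t m (Sum.inl j))
        (∑ m, (Q' θ₀ (Sum.inr i) m * A θ₀ m (Sum.inl j)
          + Q θ₀ (Sum.inr i) m * A' θ₀ m (Sum.inl j))) θ₀ :=
      HasDerivAt.fun_sum fun m _ => (hQ θ₀ _ m).mul (hA θ₀ m _)
    have h2 : (fun t => ∑ m, Q t (Sum.inr i) m * A t m (Sum.inl j))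
        = fun t => L21 t i j := by
      funext t
      have := congrArg (fun M => M (Sum.inr i) (Sum.inl j)) (hblock t)
      simpa [Matrix.mul_apply] using this
    rw [h2] at h1
    have h0 := h1.unique (hL21' i j)
    rw [Matrix.add_apply, Matrix.mul_apply, Matrix.mul_apply, ← Finset.sum_add_distrib]
    exact h0
  have hQ'A : Q' θ₀ * A θ₀ = S * (Q θ₀ * A θ₀) := by
    rw [hSdef, Matrix.mul_assoc, ← Matrix.mul_assoc ((Q θ₀)ᵀ), hQtQ, Matrix.one_mul]
  -- key identity
  have hkey : L21' = S.toBlocks₂₂ * L21 θ₀ + Y := by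
    ext i j
    have h1 := hderivQA i j
    rw [hQ'A, hblock θ₀, hXNYV] at h1
    have h2 : (S * Matrix.fromBlocks 0 (L12 θ₀) (L21 θ₀) (L22 θ₀)) (Sum.inr i) (Sum.inl j)
        = (S.toBlocks₂₂ * L21 θ₀) i j := by
      rw [← Matrix.fromBlocks_toBlocks S, Matrix.fromBlocks_multiply]
      simp
    rw [Matrix.add_apply, h2, Matrix.fromBlocks_apply₂₁] at h1
    rw [Matrix.add_apply]
    exact h1.symm
  -- invertibility facts
  have hdet : IsUnit (L21 θ₀).det := (Matrix.isUnit_iff_isUnit_det _).mp (hinv θ₀)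
  have hLL : (L21 θ₀)⁻¹ * L21 θ₀ = 1 := Matrix.nonsing_inv_mul _ hdet
  have hLL' : L21 θ₀ * (L21 θ₀)⁻¹ = 1 := Matrix.mul_nonsing_inv _ hdet
  have hM : Y * (L21 θ₀)⁻¹ = L21' * (L21 θ₀)⁻¹ - S.toBlocks₂₂ := by
    have hY : Y = L21' - S.toBlocks₂₂ * L21 θ₀ := by rw [hkey]; abel
    rw [hY, Matrix.sub_mul, Matrix.mul_assoc, hLL', Matrix.mul_one]
  -- triangularity
  have hL21'u : ∀ i j : Fin s, i < j → L21' i j = 0 := by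
    intro i j hij
    have hfun : (fun t => L21 t i j) = fun _ => (0 : ℝ) :=
      funext fun t => hlow t i j hij
    have := hL21' i j
    rw [hfun] at this
    exact this.unique (hasDerivAt_const θ₀ 0)
  have hLinvU : ∀ i j : Fin s, i < j → (L21 θ₀)⁻¹ i j = 0 := by
    have hbt : Matrix.BlockTriangular (L21 θ₀) (fun i : Fin s => OrderDual.toDual i) :=
      fun i j hij => hlow θ₀ i j hij
    haveI : Invertible (L21 θ₀) := (hinv θ₀).invertible
    have h := Matrix.blockTriangular_inv_of_blockTriangular hbt
    intro i j hij
    exact h hij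
  have hPu : ∀ i j : Fin s, i < j → (L21' * (L21 θ₀)⁻¹) i j = 0 := by
    intro i j hij
    rw [Matrix.mul_apply]
    refine Finset.sum_eq_zero fun m _ => ?_
    rcases lt_or_ge i m with hm | hm
    · rw [hL21'u i m hm, zero_mul]
    · rw [hLinvU m j (lt_of_le_of_lt hm hij), mul_zero]
  have hS22skew : ∀ i j : Fin s, S.toBlocks₂₂ i j + S.toBlocks₂₂ j i = 0 :=
    fun i j => hskew (Sum.inr i) (Sum.inr j)
  -- the main entrywise identity
  have hfin : (strictUpperPart (Y * (L21 θ₀)⁻¹))ᵀ + diagPart (Y * (L21 θ₀)⁻¹)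
      + strictLowerPart (Y * (L21 θ₀)⁻¹) = L21' * (L21 θ₀)⁻¹ := by
    ext i j
    have hMij := congrArg (fun M => M i j) hM
    have hMji := congrArg (fun M => M j i) hM
    simp only [Matrix.sub_apply] at hMij hMji
    simp only [Matrix.add_apply, Matrix.transpose_apply, strictUpperPart, diagPart,
      strictLowerPart, Matrix.of_apply]
    rcases lt_trichotomy i j with hij | hij | hij
    · rw [if_neg (by omega : ¬ j < i), if_neg (by omega : ¬ i = j),
        if_neg (by omega : ¬ j < i), hPu i j hij]
      ring
    · subst hij
      rw [if_neg (lt_irrefl i), if_pos rfl, hMij]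
      have := hS22skew i i
      linarith
    · rw [if_pos hij, if_neg (by omega : ¬ i = j), if_pos hij, hMij, hMji,
        hPu j i hij]
      have := hS22skew i j
      linarith
  rw [hfin, Matrix.mul_assoc, hLL, Matrix.mul_one]
end

section
/- In the lower-triangular array setting, the derivative of the post-array block L22 satisfies (L22)'(θ₀) = (𝓤ᵀ − 𝓤) · L22(θ₀) + (L21(θ₀))⁻ᵀ · Xᵀ · L12(θ₀) + V, where 𝓤 is the strictly upper-triangular part of Y · L21(θ₀)⁻¹ and (L21(θ₀))⁻ᵀ denotes the transpose of the inverse of L21(θ₀). -/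
open Matrix

lemma hasDerivAt_matrix_mul {ι κ σ : Type*} [Fintype κ]
    (M : ℝ → Matrix ι κ ℝ) (M' : Matrix ι κ ℝ) (N : ℝ → Matrix κ σ ℝ) (N' : Matrix κ σ ℝ)
    (θ : ℝ)
    (hM : ∀ i j, HasDerivAt (fun t => M t i j) (M' i j) θ)
    (hN : ∀ i j, HasDerivAt (fun t => N t i j) (N' i j) θ)
    (i : ι) (j : σ) :
    HasDerivAt (fun t => (M t * N t) i j) ((M' * N θ + M θ * N') i j) θ := by
  simp only [Matrix.mul_apply, Matrix.add_apply]
  rw [← Finset.sum_add_distrib]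
  exact HasDerivAt.fun_sum fun m _ => (hM i m).mul (hN m j)

/-- Lower triangular array case: the derivative of the post-array block L22 satisfies
`(L22)' = (𝓤ᵀ − 𝓤) * L22 + L21⁻ᵀ * Xᵀ * L12 + V`, where `𝓤` is the strictly
upper-triangular part of `Y * L21⁻¹`. -/
theorem lowerTriangularCase_L22_deriv
    (s k l : ℕ) (hs : 0 < s)
    (A A' : ℝ → Matrix (Fin k ⊕ Fin s) (Fin s ⊕ Fin l) ℝ)
    (Q Q' : ℝ → Matrix (Fin k ⊕ Fin s) (Fin k ⊕ Fin s) ℝ)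
    (hA : ∀ θ i j, HasDerivAt (fun t => A t i j) (A' θ i j) θ)
    (hQ : ∀ θ i j, HasDerivAt (fun t => Q t i j) (Q' θ i j) θ)
    (hQorth : ∀ θ, Q θ * (Q θ)ᵀ = 1)
    (L12 : ℝ → Matrix (Fin k) (Fin l) ℝ)
    (L21 : ℝ → Matrix (Fin s) (Fin s) ℝ)
    (L22 : ℝ → Matrix (Fin s) (Fin l) ℝ)
    (hblock : ∀ θ, Q θ * A θ = Matrix.fromBlocks 0 (L12 θ) (L21 θ) (L22 θ))
    (hlow : ∀ θ (i j : Fin s), i < j → L21 θ i j = 0)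
    (hinv : ∀ θ, IsUnit (L21 θ))
    (θ₀ : ℝ)
    (X : Matrix (Fin k) (Fin s) ℝ) (N : Matrix (Fin k) (Fin l) ℝ)
    (Y : Matrix (Fin s) (Fin s) ℝ) (V : Matrix (Fin s) (Fin l) ℝ)
    (hXNYV : Q θ₀ * A' θ₀ = Matrix.fromBlocks X N Y V)
    (L22' : Matrix (Fin s) (Fin l) ℝ)
    (hL22' : ∀ i j, HasDerivAt (fun t => L22 t i j) (L22' i j) θ₀) :
    L22' = ((strictUpperPart (Y * (L21 θ₀)⁻¹))ᵀ - strictUpperPart (Y * (L21 θ₀)⁻¹)) * L22 θ₀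
      + ((L21 θ₀)⁻¹)ᵀ * Xᵀ * L12 θ₀ + V := by
  classical
  set D : Matrix (Fin k ⊕ Fin s) (Fin s ⊕ Fin l) ℝ :=
    Q' θ₀ * A θ₀ + Q θ₀ * A' θ₀ with hDdef
  have hD : ∀ i j, HasDerivAt (fun t => (Q t * A t) i j) (D i j) θ₀ :=
    fun i j => hasDerivAt_matrix_mul Q (Q' θ₀) A (A' θ₀) θ₀
      (fun i j => hQ θ₀ i j) (fun i j => hA θ₀ i j) i j
  -- skew-symmetry of S = Q' Qᵀ
  have hskew : Q' θ₀ * (Q θ₀)ᵀ + Q θ₀ * (Q' θ₀)ᵀ = 0 := by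
    ext i j
    have h1 : HasDerivAt (fun t => (Q t * (Q t)ᵀ) i j)
        ((Q' θ₀ * (Q θ₀)ᵀ + Q θ₀ * (Q' θ₀)ᵀ) i j) θ₀ :=
      hasDerivAt_matrix_mul Q (Q' θ₀) (fun t => (Q t)ᵀ) ((Q' θ₀)ᵀ) θ₀
        (fun i j => hQ θ₀ i j) (fun i j => hQ θ₀ j i) i j
    have h2 : HasDerivAt (fun t => (Q t * (Q t)ᵀ) i j) 0 θ₀ := by
      have hfun : (fun t => (Q t * (Q t)ᵀ) i j)
          = fun _ => (1 : Matrix (Fin k ⊕ Fin s) (Fin k ⊕ Fin s) ℝ) i j := by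
        funext t; rw [hQorth t]
      rw [hfun]; exact hasDerivAt_const _ _
    simpa using h1.unique h2
  set S : Matrix (Fin k ⊕ Fin s) (Fin k ⊕ Fin s) ℝ := Q' θ₀ * (Q θ₀)ᵀ with hSdef
  have hSskew : Sᵀ = -S := by
    have h1 : Q θ₀ * (Q' θ₀)ᵀ = -S := by
      have h := hskew
      rw [add_comm] at h
      exact add_eq_zero_iff_eq_neg.mp h
    conv_lhs => rw [hSdef]
    rw [Matrix.transpose_mul, Matrix.transpose_transpose]
    exact h1
  -- derivative statements for block entries
  have hDb : ∀ i j, HasDerivAt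
      (fun t => (Matrix.fromBlocks 0 (L12 t) (L21 t) (L22 t)) i j) (D i j) θ₀ := by
    intro i j
    have h := hD i j
    simp only [hblock] at h
    exact h
  have hTL : ∀ i j, D (Sum.inl i) (Sum.inl j) = 0 := by
    intro i j
    have h := hDb (Sum.inl i) (Sum.inl j)
    have hfun : (fun t => (Matrix.fromBlocks 0 (L12 t) (L21 t) (L22 t))
        (Sum.inl i) (Sum.inl j)) = fun _ => (0 : ℝ) := by
      funext t; simp [Matrix.fromBlocks_apply₁₁]
    rw [hfun] at h
    exact h.unique (hasDerivAt_const _ _)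
  have hBL : ∀ i j : Fin s, i < j → D (Sum.inr i) (Sum.inl j) = 0 := by
    intro i j hij
    have h := hDb (Sum.inr i) (Sum.inl j)
    have hfun : (fun t => (Matrix.fromBlocks 0 (L12 t) (L21 t) (L22 t))
        (Sum.inr i) (Sum.inl j)) = fun _ => (0 : ℝ) := by
      funext t; simp [Matrix.fromBlocks_apply₂₁, hlow t i j hij]
    rw [hfun] at h
    exact h.unique (hasDerivAt_const _ _)
  have hBR : ∀ i j, D (Sum.inr i) (Sum.inr j) = L22' i j := by
    intro i j
    have h := hDb (Sum.inr i) (Sum.inr j)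
    have hfun : (fun t => (Matrix.fromBlocks 0 (L12 t) (L21 t) (L22 t))
        (Sum.inr i) (Sum.inr j)) = fun t => L22 t i j := by
      funext t; simp [Matrix.fromBlocks_apply₂₂]
    rw [hfun] at h
    exact h.unique (hL22' i j)
  -- express D in block form
  have hQtQ : (Q θ₀)ᵀ * Q θ₀ = 1 := mul_eq_one_comm.mp (hQorth θ₀)
  have hAeq : A θ₀ = (Q θ₀)ᵀ * Matrix.fromBlocks 0 (L12 θ₀) (L21 θ₀) (L22 θ₀) := by
    calc A θ₀ = ((Q θ₀)ᵀ * Q θ₀) * A θ₀ := by rw [hQtQ, Matrix.one_mul]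
    _ = (Q θ₀)ᵀ * (Q θ₀ * A θ₀) := by rw [Matrix.mul_assoc]
    _ = _ := by rw [hblock]
  set S11 := S.toBlocks₁₁ with hS11
  set S12 := S.toBlocks₁₂ with hS12
  set S21 := S.toBlocks₂₁ with hS21
  set S22 := S.toBlocks₂₂ with hS22
  have hSblocks : S = Matrix.fromBlocks S11 S12 S21 S22 := (Matrix.fromBlocks_toBlocks S).symm
  have hDeq : D = Matrix.fromBlocks (S12 * L21 θ₀ + X) (S11 * L12 θ₀ + S12 * L22 θ₀ + N)
      (S22 * L21 θ₀ + Y) (S21 * L12 θ₀ + S22 * L22 θ₀ + V) := by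
    have h1 : D = S * Matrix.fromBlocks 0 (L12 θ₀) (L21 θ₀) (L22 θ₀)
        + Matrix.fromBlocks X N Y V := by
      rw [hDdef, hAeq, ← hXNYV, hSdef, Matrix.mul_assoc]
    rw [h1, hSblocks, Matrix.fromBlocks_multiply, Matrix.fromBlocks_add]
    simp [Matrix.mul_zero, Matrix.zero_mul]
  -- block equations
  have eq1 : S12 * L21 θ₀ + X = 0 := by
    ext i j
    have h := hTL i j
    rw [hDeq] at h
    simpa [Matrix.fromBlocks_apply₁₁] using h
  have eq2 : ∀ i j : Fin s, i < j → (S22 * L21 θ₀ + Y) i j = 0 := by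
    intro i j hij
    have h := hBL i j hij
    rw [hDeq] at h
    simpa [Matrix.fromBlocks_apply₂₁] using h
  have eq3 : L22' = S21 * L12 θ₀ + S22 * L22 θ₀ + V := by
    ext i j
    have h := hBR i j
    rw [hDeq] at h
    simpa [Matrix.fromBlocks_apply₂₂] using h.symm
  -- inverse facts
  have hdet : IsUnit (L21 θ₀).det := (Matrix.isUnit_iff_isUnit_det _).mp (hinv θ₀)
  have hmulinv : L21 θ₀ * (L21 θ₀)⁻¹ = 1 := Matrix.mul_nonsing_inv _ hdet
  have hbt : (L21 θ₀).BlockTriangular (OrderDual.toDual : Fin s → (Fin s)ᵒᵈ) := by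
    intro i j hij
    exact hlow θ₀ i j hij
  haveI : Invertible (L21 θ₀) := (hinv θ₀).invertible
  have hbtinv : ((L21 θ₀)⁻¹).BlockTriangular (OrderDual.toDual : Fin s → (Fin s)ᵒᵈ) :=
    Matrix.blockTriangular_inv_of_blockTriangular hbt
  -- S22 = M₀ * L21⁻¹ - Y * L21⁻¹ with M₀ lower triangular
  set M₀ : Matrix (Fin s) (Fin s) ℝ := S22 * L21 θ₀ + Y with hM₀def
  have hM₀bt : M₀.BlockTriangular (OrderDual.toDual : Fin s → (Fin s)ᵒᵈ) := by
    intro i j hij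
    exact eq2 i j hij
  have hLTbt : (M₀ * (L21 θ₀)⁻¹).BlockTriangular (OrderDual.toDual : Fin s → (Fin s)ᵒᵈ) :=
    hM₀bt.mul hbtinv
  have hS22eq : S22 = M₀ * (L21 θ₀)⁻¹ - Y * (L21 θ₀)⁻¹ := by
    calc S22 = S22 * 1 := (Matrix.mul_one _).symm
    _ = S22 * (L21 θ₀ * (L21 θ₀)⁻¹) := by rw [hmulinv]
    _ = (S22 * L21 θ₀) * (L21 θ₀)⁻¹ := by rw [Matrix.mul_assoc]
    _ = (M₀ - Y) * (L21 θ₀)⁻¹ := by rw [hM₀def, add_sub_cancel_right]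
    _ = M₀ * (L21 θ₀)⁻¹ - Y * (L21 θ₀)⁻¹ := Matrix.sub_mul _ _ _
  -- skew-symmetry of S22 and relation S21 = -S12ᵀ
  have hS22skew : ∀ i j : Fin s, S22 j i = -S22 i j := by
    intro i j
    have h := congrFun (congrFun hSskew (Sum.inr i)) (Sum.inr j)
    simpa [hS22, Matrix.toBlocks₂₂, Matrix.transpose_apply, Matrix.neg_apply] using h
  have hS21eq : ∀ i : Fin s, ∀ j : Fin k, S21 i j = -S12 j i := by
    intro i j
    have h := congrFun (congrFun hSskew (Sum.inr i)) (Sum.inl j)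
    simp only [hS21, hS12, Matrix.toBlocks₂₁, Matrix.toBlocks₁₂, Matrix.of_apply]
    have h' : S (Sum.inl j) (Sum.inr i) = -S (Sum.inr i) (Sum.inl j) := by
      simpa [Matrix.transpose_apply, Matrix.neg_apply] using h
    linarith
  -- S22 = Uᵀ - U
  set U : Matrix (Fin s) (Fin s) ℝ := strictUpperPart (Y * (L21 θ₀)⁻¹) with hUdef
  have hS22upper : ∀ i j : Fin s, i < j → S22 i j = -(Y * (L21 θ₀)⁻¹) i j := by
    intro i j hij
    have h1 : (M₀ * (L21 θ₀)⁻¹) i j = 0 := hLTbt hij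
    have h2 := congrFun (congrFun hS22eq i) j
    simp only [Matrix.sub_apply] at h2
    rw [h1] at h2
    simpa using h2
  have hS22U : S22 = Uᵀ - U := by
    ext i j
    rcases lt_trichotomy i j with hij | hij | hij
    · have h := hS22upper i j hij
      simp only [Matrix.sub_apply, Matrix.transpose_apply, hUdef, strictUpperPart,
        Matrix.of_apply]
      rw [if_neg (not_lt.mpr (le_of_lt hij)), if_pos hij]
      simpa using h
    · subst hij
      have h := hS22skew i i
      have h0 : S22 i i = 0 := by linarith
      simp only [Matrix.sub_apply, Matrix.transpose_apply, hUdef, strictUpperPart,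
        Matrix.of_apply, if_neg (lt_irrefl i)]
      simpa using h0
    · have h := hS22upper j i hij
      have h2 : S22 i j = -S22 j i := (hS22skew j i)
      simp only [Matrix.sub_apply, Matrix.transpose_apply, hUdef, strictUpperPart,
        Matrix.of_apply]
      rw [if_pos hij, if_neg (not_lt.mpr (le_of_lt hij))]
      rw [h2, h]
      ring
  -- S21 = (L21⁻¹)ᵀ Xᵀ
  have hS12eq : S12 = -(X * (L21 θ₀)⁻¹) := by
    have h : S12 * L21 θ₀ = -X := add_eq_zero_iff_eq_neg.mp eq1
    calc S12 = S12 * 1 := (Matrix.mul_one _).symm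
    _ = S12 * (L21 θ₀ * (L21 θ₀)⁻¹) := by rw [hmulinv]
    _ = (S12 * L21 θ₀) * (L21 θ₀)⁻¹ := by rw [Matrix.mul_assoc]
    _ = (-X) * (L21 θ₀)⁻¹ := by rw [h]
    _ = -(X * (L21 θ₀)⁻¹) := Matrix.neg_mul _ _
  have hS21mat : S21 = ((L21 θ₀)⁻¹)ᵀ * Xᵀ := by
    ext i j
    rw [hS21eq i j, hS12eq]
    simp [Matrix.mul_apply, Matrix.transpose_apply, Finset.mul_sum, mul_comm]
  -- conclude
  rw [eq3, hS22U, hS21mat]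
  abel
end

section
/- In the lower-triangular array setting, the bottom-right s×s block of the skew-symmetric matrix Q'(θ₀) · Q(θ₀)ᵀ (the block formed by the last s rows and last s columns) equals 𝓤ᵀ − 𝓤, where 𝓤 is the strictly upper-triangular part of Y · L21(θ₀)⁻¹. -/
open Matrix

/-- Lower triangular array case: the bottom-right `s × s` block of the skew-symmetric
matrix `Q' θ₀ * (Q θ₀)ᵀ` equals `𝓤ᵀ − 𝓤`, where `𝓤` is the strictly upper-triangular
part of `Y * (L21 θ₀)⁻¹`. -/
theorem lowerTriangularCase_block22_of_skew
    (s k l : ℕ) (hs : 0 < s)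
    (A A' : ℝ → Matrix (Fin k ⊕ Fin s) (Fin s ⊕ Fin l) ℝ)
    (Q Q' : ℝ → Matrix (Fin k ⊕ Fin s) (Fin k ⊕ Fin s) ℝ)
    (hA : ∀ θ i j, HasDerivAt (fun t => A t i j) (A' θ i j) θ)
    (hQ : ∀ θ i j, HasDerivAt (fun t => Q t i j) (Q' θ i j) θ)
    (hQorth : ∀ θ, Q θ * (Q θ)ᵀ = 1)
    (L12 : ℝ → Matrix (Fin k) (Fin l) ℝ)
    (L21 : ℝ → Matrix (Fin s) (Fin s) ℝ)
    (L22 : ℝ → Matrix (Fin s) (Fin l) ℝ)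
    (hblock : ∀ θ, Q θ * A θ = Matrix.fromBlocks 0 (L12 θ) (L21 θ) (L22 θ))
    (hlow : ∀ θ (i j : Fin s), i < j → L21 θ i j = 0)
    (hinv : ∀ θ, IsUnit (L21 θ))
    (θ₀ : ℝ)
    (X : Matrix (Fin k) (Fin s) ℝ) (N : Matrix (Fin k) (Fin l) ℝ)
    (Y : Matrix (Fin s) (Fin s) ℝ) (V : Matrix (Fin s) (Fin l) ℝ)
    (hXNYV : Q θ₀ * A' θ₀ = Matrix.fromBlocks X N Y V) :
    (Q' θ₀ * (Q θ₀)ᵀ).toBlocks₂₂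
      = (strictUpperPart (Y * (L21 θ₀)⁻¹))ᵀ - strictUpperPart (Y * (L21 θ₀)⁻¹) := by
  set S : Matrix (Fin k ⊕ Fin s) (Fin k ⊕ Fin s) ℝ := Q' θ₀ * (Q θ₀)ᵀ with hSdef
  -- skew symmetry of S
  have hskew : ∀ i j, S i j + S j i = 0 := by
    intro i j
    have h1 : HasDerivAt (fun t => ∑ m, Q t i m * Q t j m)
        (∑ m, (Q' θ₀ i m * Q θ₀ j m + Q θ₀ i m * Q' θ₀ j m)) θ₀ :=
      HasDerivAt.fun_sum fun m _ => (hQ θ₀ i m).mul (hQ θ₀ j m)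
    have h2 : HasDerivAt (fun t => ∑ m, Q t i m * Q t j m) 0 θ₀ := by
      have he : (fun t => ∑ m, Q t i m * Q t j m) = fun _ => (1 : Matrix _ _ ℝ) i j := by
        funext t
        rw [← hQorth t]
        simp [Matrix.mul_apply]
      rw [he]; exact hasDerivAt_const _ _
    have h3 := h1.unique h2
    have : S i j + S j i = ∑ m, (Q' θ₀ i m * Q θ₀ j m + Q θ₀ i m * Q' θ₀ j m) := by
      simp [hSdef, Matrix.mul_apply, Finset.sum_add_distrib, mul_comm]
    rw [this, h3]
  -- Qᵀ Q = 1
  have hQtQ : (Q θ₀)ᵀ * Q θ₀ = 1 := mul_eq_one_comm.mp (hQorth θ₀)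
  -- Q' A = S * (Q A)
  have hQ'A : Q' θ₀ * A θ₀ = S * (Q θ₀ * A θ₀) := by
    rw [hSdef, Matrix.mul_assoc, ← Matrix.mul_assoc (Q θ₀)ᵀ, hQtQ, Matrix.one_mul]
  -- derivative of (Q A) entries
  have hprod : ∀ i j, HasDerivAt (fun t => (Q t * A t) i j)
      ((Q' θ₀ * A θ₀ + Q θ₀ * A' θ₀) i j) θ₀ := by
    intro i j
    have h1 : HasDerivAt (fun t => ∑ m, Q t i m * A t m j)
        (∑ m, (Q' θ₀ i m * A θ₀ m j + Q θ₀ i m * A' θ₀ m j)) θ₀ :=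
      HasDerivAt.fun_sum fun m _ => (hQ θ₀ i m).mul (hA θ₀ m j)
    have he : (fun t => (Q t * A t) i j) = fun t => ∑ m, Q t i m * A t m j := by
      funext t; simp [Matrix.mul_apply]
    rw [he]
    convert h1 using 1
    simp [Matrix.mul_apply, Finset.sum_add_distrib]
  -- the derivative of L21
  set L21' : Matrix (Fin s) (Fin s) ℝ :=
    Matrix.of fun i j => (Q' θ₀ * A θ₀ + Q θ₀ * A' θ₀) (Sum.inr i) (Sum.inl j) with hL21'def
  have hL21'low : ∀ i j : Fin s, i < j → L21' i j = 0 := by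
    intro i j hij
    have h1 := hprod (Sum.inr i) (Sum.inl j)
    have h2 : HasDerivAt (fun t => (Q t * A t) (Sum.inr i) (Sum.inl j)) 0 θ₀ := by
      have he : (fun t => (Q t * A t) (Sum.inr i) (Sum.inl j)) = fun _ => (0 : ℝ) := by
        funext t
        rw [hblock t]
        simp [Matrix.fromBlocks, hlow t i j hij]
      rw [he]; exact hasDerivAt_const _ _
    exact h1.unique h2
  -- key identity: S₂₂ * L21 + Y = L21'
  have hkey : S.toBlocks₂₂ * L21 θ₀ + Y = L21' := by
    ext i j
    have h1 : (S * Matrix.fromBlocks 0 (L12 θ₀) (L21 θ₀) (L22 θ₀)) (Sum.inr i) (Sum.inl j)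
        = ∑ m, S (Sum.inr i) (Sum.inr m) * L21 θ₀ m j := by
      simp [Matrix.mul_apply, Fintype.sum_sum_type, Matrix.fromBlocks]
    have h2 : (S.toBlocks₂₂ * L21 θ₀) i j
        = ∑ m, S (Sum.inr i) (Sum.inr m) * L21 θ₀ m j := by
      simp [Matrix.mul_apply, Matrix.toBlocks₂₂]
    have : (Q' θ₀ * A θ₀ + Q θ₀ * A' θ₀) (Sum.inr i) (Sum.inl j)
        = (S.toBlocks₂₂ * L21 θ₀ + Y) i j := by
      rw [Matrix.add_apply, hQ'A, hblock θ₀, hXNYV, h1, Matrix.add_apply, h2]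
      simp [Matrix.fromBlocks]
    rw [hL21'def]
    exact (this.symm)
  -- inverse facts
  have hL21inv : L21 θ₀ * (L21 θ₀)⁻¹ = 1 :=
    Matrix.mul_nonsing_inv _ ((Matrix.isUnit_iff_isUnit_det _).mp (hinv θ₀))
  have hS22 : S.toBlocks₂₂ = L21' * (L21 θ₀)⁻¹ - Y * (L21 θ₀)⁻¹ := by
    have := congrArg (fun M => M * (L21 θ₀)⁻¹) hkey
    simp only [Matrix.add_mul, Matrix.mul_assoc, hL21inv, Matrix.mul_one] at this
    rw [← this]; abel
  -- (L21 θ₀)⁻¹ is lower triangular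
  have hinvlow : ∀ i j : Fin s, i < j → (L21 θ₀)⁻¹ i j = 0 := by
    haveI : Invertible (L21 θ₀) := (hinv θ₀).invertible
    haveI : Invertible (L21 θ₀)ᵀ := Matrix.invertibleTranspose _
    have hbt : Matrix.BlockTriangular (L21 θ₀)ᵀ id := by
      intro i j hij
      exact hlow θ₀ j i hij
    have hbti := Matrix.blockTriangular_inv_of_blockTriangular hbt
    intro i j hij
    have := hbti (i := j) (j := i) hij
    rwa [← Matrix.transpose_nonsing_inv, Matrix.transpose_apply] at this
  -- T := L21' * (L21 θ₀)⁻¹ is lower triangular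
  have hTlow : ∀ i j : Fin s, i < j → (L21' * (L21 θ₀)⁻¹) i j = 0 := by
    intro i j hij
    rw [Matrix.mul_apply]
    apply Finset.sum_eq_zero
    intro m _
    rcases lt_or_ge i m with hm | hm
    · rw [hL21'low i m hm, zero_mul]
    · rw [hinvlow m j (lt_of_le_of_lt hm hij), mul_zero]
  -- finish entrywise
  ext i j
  have hS22ij : ∀ a b : Fin s, S.toBlocks₂₂ a b
      = (L21' * (L21 θ₀)⁻¹) a b - (Y * (L21 θ₀)⁻¹) a b := by
    intro a b; rw [hS22]; simp
  have hskew' : ∀ a b : Fin s, S.toBlocks₂₂ a b + S.toBlocks₂₂ b a = 0 := by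
    intro a b; exact hskew (Sum.inr a) (Sum.inr b)
  rcases lt_trichotomy i j with hij | hij | hij
  · rw [hS22ij i j, hTlow i j hij]
    simp [strictUpperPart, hij, not_lt_of_gt hij, asymm hij]
  · subst hij
    have h0 : S.toBlocks₂₂ i i = 0 := by
      have := hskew' i i; linarith
    rw [h0]
    simp [strictUpperPart]
  · have h1 : S.toBlocks₂₂ i j = - S.toBlocks₂₂ j i := by
      have := hskew' i j; linarith
    rw [h1, hS22ij j i, hTlow j i hij]
    simp [strictUpperPart, hij, not_lt_of_gt hij, asymm hij]
end

section
/- In the lower-triangular array setting, the top-right k×s block of Q'(θ₀) · Q(θ₀)ᵀ (the block formed by the first k rows and the last s columns) equals −X · L21(θ₀)⁻¹. -/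
open Matrix

/-- Lower triangular array case: the top-right `k × s` block of `Q' θ₀ * (Q θ₀)ᵀ`
equals `−X * (L21 θ₀)⁻¹`. -/
theorem lowerTriangularCase_block12_of_skew
    (s k l : ℕ) (hs : 0 < s)
    (A A' : ℝ → Matrix (Fin k ⊕ Fin s) (Fin s ⊕ Fin l) ℝ)
    (Q Q' : ℝ → Matrix (Fin k ⊕ Fin s) (Fin k ⊕ Fin s) ℝ)
    (hA : ∀ θ i j, HasDerivAt (fun t => A t i j) (A' θ i j) θ)
    (hQ : ∀ θ i j, HasDerivAt (fun t => Q t i j) (Q' θ i j) θ)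
    (hQorth : ∀ θ, Q θ * (Q θ)ᵀ = 1)
    (L12 : ℝ → Matrix (Fin k) (Fin l) ℝ)
    (L21 : ℝ → Matrix (Fin s) (Fin s) ℝ)
    (L22 : ℝ → Matrix (Fin s) (Fin l) ℝ)
    (hblock : ∀ θ, Q θ * A θ = Matrix.fromBlocks 0 (L12 θ) (L21 θ) (L22 θ))
    (hlow : ∀ θ (i j : Fin s), i < j → L21 θ i j = 0)
    (hinv : ∀ θ, IsUnit (L21 θ))
    (θ₀ : ℝ)
    (X : Matrix (Fin k) (Fin s) ℝ) (N : Matrix (Fin k) (Fin l) ℝ)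
    (Y : Matrix (Fin s) (Fin s) ℝ) (V : Matrix (Fin s) (Fin l) ℝ)
    (hXNYV : Q θ₀ * A' θ₀ = Matrix.fromBlocks X N Y V) :
    (Q' θ₀ * (Q θ₀)ᵀ).toBlocks₁₂ = -(X * (L21 θ₀)⁻¹) := by
  -- derivative of the product entrywise
  have key : ∀ i j, HasDerivAt (fun t => (Q t * A t) i j)
      ((Q' θ₀ * A θ₀ + Q θ₀ * A' θ₀) i j) θ₀ := by
    intro i j
    have h := HasDerivAt.fun_sum (u := Finset.univ)
      (fun m _ => ((hQ θ₀ i m).mul (hA θ₀ m j)))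
    simp only [Matrix.mul_apply, Matrix.add_apply]
    rw [← Finset.sum_add_distrib]
    exact h
  -- (1,1) block of Q'A + QA' vanishes
  have h11 : ∀ (i : Fin k) (j : Fin s),
      (Q' θ₀ * A θ₀ + Q θ₀ * A' θ₀) (Sum.inl i) (Sum.inl j) = 0 := by
    intro i j
    have h0 : (fun t => (Q t * A t) (Sum.inl i) (Sum.inl j)) = fun _ => (0 : ℝ) := by
      funext t; rw [hblock t]; simp [Matrix.fromBlocks]
    have hk := key (Sum.inl i) (Sum.inl j)
    rw [h0] at hk
    exact hk.unique (hasDerivAt_const θ₀ 0)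
  have hQtQ : (Q θ₀)ᵀ * Q θ₀ = 1 := mul_eq_one_comm.mp (hQorth θ₀)
  set C : Matrix (Fin k ⊕ Fin s) (Fin k ⊕ Fin s) ℝ := Q' θ₀ * (Q θ₀)ᵀ with hC
  have hQ'A : Q' θ₀ * A θ₀ = C * (Q θ₀ * A θ₀) := by
    rw [hC, Matrix.mul_assoc, ← Matrix.mul_assoc (Q θ₀)ᵀ, hQtQ, Matrix.one_mul]
  have hCblocks : C = Matrix.fromBlocks C.toBlocks₁₁ C.toBlocks₁₂ C.toBlocks₂₁ C.toBlocks₂₂ :=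
    (Matrix.fromBlocks_toBlocks C).symm
  have hprod : Q' θ₀ * A θ₀ =
      Matrix.fromBlocks (C.toBlocks₁₂ * L21 θ₀)
        (C.toBlocks₁₁ * L12 θ₀ + C.toBlocks₁₂ * L22 θ₀)
        (C.toBlocks₂₂ * L21 θ₀)
        (C.toBlocks₂₁ * L12 θ₀ + C.toBlocks₂₂ * L22 θ₀) := by
    rw [hQ'A, hblock θ₀, hCblocks, Matrix.fromBlocks_multiply]
    simp
  have hmain : C.toBlocks₁₂ * L21 θ₀ + X = 0 := by
    ext i j
    have := h11 i j
    rw [Matrix.add_apply, hprod, hXNYV] at this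
    simpa [Matrix.fromBlocks] using this
  have hdet : IsUnit (L21 θ₀).det := (Matrix.isUnit_iff_isUnit_det _).mp (hinv θ₀)
  have : C.toBlocks₁₂ * L21 θ₀ = -X := by
    have := hmain
    linear_combination (norm := abel) this
  calc C.toBlocks₁₂ = C.toBlocks₁₂ * (L21 θ₀ * (L21 θ₀)⁻¹) := by
        rw [Matrix.mul_nonsing_inv _ hdet, Matrix.mul_one]
    _ = (C.toBlocks₁₂ * L21 θ₀) * (L21 θ₀)⁻¹ := by rw [Matrix.mul_assoc]
    _ = -X * (L21 θ₀)⁻¹ := by rw [this]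
    _ = -(X * (L21 θ₀)⁻¹) := by rw [Matrix.neg_mul]
end

section
/- In the upper-triangular array setting, the derivative of the upper-triangular post-array block satisfies (R11)'(θ₀) = (𝓛ᵀ + 𝓓 + 𝓤) · R11(θ₀), where 𝓛, 𝓓, 𝓤 are the strictly lower-triangular, diagonal, and strictly upper-triangular parts of X · R11(θ₀)⁻¹. -/
open Matrix

/-- Upper triangular array case: the derivative of the upper-triangular post-array block
satisfies `(R11)' = (𝓛ᵀ + 𝓓 + 𝓤) * R11`, where `𝓛, 𝓓, 𝓤` are the strictly
lower-triangular, diagonal and strictly upper-triangular parts of `X * R11⁻¹`. -/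
theorem upperTriangularCase_R11_deriv
    (s k l : ℕ) (hs : 0 < s)
    (A A' : ℝ → Matrix (Fin s ⊕ Fin k) (Fin s ⊕ Fin l) ℝ)
    (Q Q' : ℝ → Matrix (Fin s ⊕ Fin k) (Fin s ⊕ Fin k) ℝ)
    (hA : ∀ θ i j, HasDerivAt (fun t => A t i j) (A' θ i j) θ)
    (hQ : ∀ θ i j, HasDerivAt (fun t => Q t i j) (Q' θ i j) θ)
    (hQorth : ∀ θ, Q θ * (Q θ)ᵀ = 1)
    (R11 : ℝ → Matrix (Fin s) (Fin s) ℝ)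
    (R12 : ℝ → Matrix (Fin s) (Fin l) ℝ)
    (R22 : ℝ → Matrix (Fin k) (Fin l) ℝ)
    (hblock : ∀ θ, Q θ * A θ = Matrix.fromBlocks (R11 θ) (R12 θ) 0 (R22 θ))
    (hupp : ∀ θ (i j : Fin s), j < i → R11 θ i j = 0)
    (hinv : ∀ θ, IsUnit (R11 θ))
    (θ₀ : ℝ)
    (X : Matrix (Fin s) (Fin s) ℝ) (N : Matrix (Fin s) (Fin l) ℝ)
    (Y : Matrix (Fin k) (Fin s) ℝ) (V : Matrix (Fin k) (Fin l) ℝ)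
    (hXNYV : Q θ₀ * A' θ₀ = Matrix.fromBlocks X N Y V)
    (R11' : Matrix (Fin s) (Fin s) ℝ)
    (hR11' : ∀ i j, HasDerivAt (fun t => R11 t i j) (R11' i j) θ₀) :
    R11' = ((strictLowerPart (X * (R11 θ₀)⁻¹))ᵀ + diagPart (X * (R11 θ₀)⁻¹)
      + strictUpperPart (X * (R11 θ₀)⁻¹)) * R11 θ₀ := by
  set R : Matrix (Fin s) (Fin s) ℝ := R11 θ₀ with hRdef
  have hdet : IsUnit R.det := (Matrix.isUnit_iff_isUnit_det _).mp (hinv θ₀)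
  have hRinv : R * R⁻¹ = 1 := Matrix.mul_nonsing_inv _ hdet
  have hRinv' : R⁻¹ * R = 1 := Matrix.nonsing_inv_mul _ hdet
  have hQQ : (Q θ₀)ᵀ * Q θ₀ = 1 := mul_eq_one_comm.mp (hQorth θ₀)
  set S : Matrix (Fin s ⊕ Fin k) (Fin s ⊕ Fin k) ℝ := Q' θ₀ * (Q θ₀)ᵀ with hSdef
  -- S is skew-symmetric
  have hskew : S + Sᵀ = 0 := by
    ext a b
    have h1 : HasDerivAt (fun t => (Q t * (Q t)ᵀ) a b) ((S + Sᵀ) a b) θ₀ := by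
      have : ∀ t, (Q t * (Q t)ᵀ) a b = ∑ c, Q t a c * Q t b c := by
        intro t; simp [Matrix.mul_apply]
      simp only [this]
      have : (S + Sᵀ) a b = ∑ c, (Q' θ₀ a c * Q θ₀ b c + Q θ₀ a c * Q' θ₀ b c) := by
        simp [hSdef, Matrix.mul_apply, Matrix.add_apply, Finset.sum_add_distrib,
          mul_comm]
      rw [this]
      exact HasDerivAt.fun_sum fun c _ => (hQ θ₀ a c).mul (hQ θ₀ b c)
    have h2 : (fun t => (Q t * (Q t)ᵀ) a b) = fun _ => (1 : Matrix (Fin s ⊕ Fin k) (Fin s ⊕ Fin k) ℝ) a b := by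
      funext t; rw [hQorth t]
    rw [h2] at h1
    have := h1.unique (hasDerivAt_const θ₀ _)
    simpa using this
  have hS11skew : ∀ a b : Fin s, S.toBlocks₁₁ b a = - S.toBlocks₁₁ a b := by
    intro a b
    have := congrFun (congrFun hskew (Sum.inl a)) (Sum.inl b)
    simp only [Matrix.add_apply, Matrix.transpose_apply, Matrix.zero_apply] at this
    simp only [Matrix.toBlocks₁₁, Matrix.of_apply]
    linarith
  -- derivative of Q * A entrywise
  have hQA : ∀ (i : Fin s ⊕ Fin k) (j : Fin s ⊕ Fin l),
      HasDerivAt (fun t => (Q t * A t) i j)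
        ((Q' θ₀ * A θ₀ + Q θ₀ * A' θ₀) i j) θ₀ := by
    intro i j
    have h1 : ∀ t, (Q t * A t) i j = ∑ c, Q t i c * A t c j := by
      intro t; simp [Matrix.mul_apply]
    have h2 : (Q' θ₀ * A θ₀ + Q θ₀ * A' θ₀) i j
        = ∑ c, (Q' θ₀ i c * A θ₀ c j + Q θ₀ i c * A' θ₀ c j) := by
      simp [Matrix.mul_apply, Matrix.add_apply, Finset.sum_add_distrib]
    simp only [h1, h2]
    exact HasDerivAt.fun_sum fun c _ => (hQ θ₀ i c).mul (hA θ₀ c j)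
  have hE : ∀ i j : Fin s,
      (Q' θ₀ * A θ₀ + Q θ₀ * A' θ₀) (Sum.inl i) (Sum.inl j) = R11' i j := by
    intro i j
    have h1 := hQA (Sum.inl i) (Sum.inl j)
    have h2 : (fun t => (Q t * A t) (Sum.inl i) (Sum.inl j)) = fun t => R11 t i j := by
      funext t; rw [hblock t]; rfl
    rw [h2] at h1
    exact h1.unique (hR11' i j)
  -- Q' * A = S * (Q * A)
  have hQ'A : Q' θ₀ * A θ₀ = S * (Q θ₀ * A θ₀) := by
    rw [hSdef, Matrix.mul_assoc, ← Matrix.mul_assoc ((Q θ₀)ᵀ), hQQ, Matrix.one_mul]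
  have hQ'Aentry : ∀ i j : Fin s,
      (Q' θ₀ * A θ₀) (Sum.inl i) (Sum.inl j) = (S.toBlocks₁₁ * R) i j := by
    intro i j
    rw [hQ'A, hblock θ₀, ← Matrix.fromBlocks_toBlocks S, Matrix.fromBlocks_multiply]
    simp [Matrix.fromBlocks_apply₁₁, hRdef]
  -- key matrix identity
  have hmat : R11' = S.toBlocks₁₁ * R + X := by
    ext i j
    have h := hE i j
    rw [Matrix.add_apply, hQ'Aentry i j, hXNYV, Matrix.fromBlocks_apply₁₁] at h
    rw [← h, Matrix.add_apply]
  -- triangularity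
  have hR11'tri : Matrix.BlockTriangular R11' (id : Fin s → Fin s) := by
    intro i j hij
    exact ((hR11' i j).unique (by
      have : (fun t => R11 t i j) = fun _ => (0 : ℝ) := funext fun t => hupp t i j hij
      rw [this]; exact hasDerivAt_const θ₀ 0))
  have hRtri : Matrix.BlockTriangular R (id : Fin s → Fin s) := fun i j hij => hupp θ₀ i j hij
  haveI : Invertible R := R.invertibleOfIsUnitDet hdet
  have hRinvtri : Matrix.BlockTriangular R⁻¹ (id : Fin s → Fin s) :=
    Matrix.blockTriangular_inv_of_blockTriangular hRtri
  have hUtri : Matrix.BlockTriangular (R11' * R⁻¹) (id : Fin s → Fin s) :=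
    hR11'tri.mul hRinvtri
  -- X * R⁻¹ = R11' * R⁻¹ - S11
  have hM : X * R⁻¹ = R11' * R⁻¹ - S.toBlocks₁₁ := by
    have hX : X = R11' - S.toBlocks₁₁ * R := eq_sub_of_add_eq' hmat.symm
    rw [hX, Matrix.sub_mul, Matrix.mul_assoc, hRinv, Matrix.mul_one]
  have hMe : ∀ a b : Fin s, (X * R⁻¹) a b = (R11' * R⁻¹) a b - S.toBlocks₁₁ a b := by
    intro a b; rw [hM, Matrix.sub_apply]
  -- conclude
  suffices h : (strictLowerPart (X * R⁻¹))ᵀ + diagPart (X * R⁻¹) + strictUpperPart (X * R⁻¹)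
      = R11' * R⁻¹ by
    rw [h, Matrix.mul_assoc, hRinv', Matrix.mul_one]
  ext i j
  simp only [Matrix.add_apply, Matrix.transpose_apply, strictLowerPart, diagPart,
    strictUpperPart, Matrix.of_apply]
  rcases lt_trichotomy i j with hij | hij | hij
  · rw [if_pos hij, if_neg (ne_of_lt hij), if_pos hij, hMe, hMe,
      hUtri (show (id j : Fin s) > id i from hij), hS11skew j i]
    ring
  · subst hij
    rw [if_neg (lt_irrefl i), if_pos rfl, hMe]
    have : S.toBlocks₁₁ i i = 0 := by linarith [hS11skew i i]
    rw [this]; ring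
  · rw [if_neg (not_lt.mpr hij.le), if_neg (ne_of_gt hij), if_neg (not_lt.mpr hij.le),
      hUtri (show (id j : Fin s) < id i from hij)]
    ring
end

section
/- In the upper-triangular array setting, the derivative of the post-array block R12 satisfies (R12)'(θ₀) = (𝓛ᵀ − 𝓛) · R12(θ₀) + (R11(θ₀))⁻ᵀ · Yᵀ · R22(θ₀) + N, where 𝓛 is the strictly lower-triangular part of X · R11(θ₀)⁻¹ and (R11(θ₀))⁻ᵀ denotes the transpose of the inverse of R11(θ₀). -/
open Matrix

/-- Entrywise derivative of a matrix product. -/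
theorem hasDerivAt_matrix_mul_s6 {m n p : Type*} [Fintype n]
    (F F' : ℝ → Matrix m n ℝ) (G G' : ℝ → Matrix n p ℝ) (θ : ℝ)
    (hF : ∀ i j, HasDerivAt (fun t => F t i j) (F' θ i j) θ)
    (hG : ∀ i j, HasDerivAt (fun t => G t i j) (G' θ i j) θ)
    (i : m) (j : p) :
    HasDerivAt (fun t => (F t * G t) i j) ((F' θ * G θ + F θ * G' θ) i j) θ := by
  simp only [Matrix.mul_apply, Matrix.add_apply, ← Finset.sum_add_distrib]
  exact HasDerivAt.fun_sum fun x _ => (hF i x).mul (hG x j)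

/-- Upper triangular array case: the derivative of the post-array block R12 satisfies
`(R12)' = (𝓛ᵀ − 𝓛) * R12 + R11⁻ᵀ * Yᵀ * R22 + N`, where `𝓛` is the strictly
lower-triangular part of `X * R11⁻¹`. -/
theorem upperTriangularCase_R12_deriv
    (s k l : ℕ) (hs : 0 < s)
    (A A' : ℝ → Matrix (Fin s ⊕ Fin k) (Fin s ⊕ Fin l) ℝ)
    (Q Q' : ℝ → Matrix (Fin s ⊕ Fin k) (Fin s ⊕ Fin k) ℝ)
    (hA : ∀ θ i j, HasDerivAt (fun t => A t i j) (A' θ i j) θ)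
    (hQ : ∀ θ i j, HasDerivAt (fun t => Q t i j) (Q' θ i j) θ)
    (hQorth : ∀ θ, Q θ * (Q θ)ᵀ = 1)
    (R11 : ℝ → Matrix (Fin s) (Fin s) ℝ)
    (R12 : ℝ → Matrix (Fin s) (Fin l) ℝ)
    (R22 : ℝ → Matrix (Fin k) (Fin l) ℝ)
    (hblock : ∀ θ, Q θ * A θ = Matrix.fromBlocks (R11 θ) (R12 θ) 0 (R22 θ))
    (hupp : ∀ θ (i j : Fin s), j < i → R11 θ i j = 0)
    (hinv : ∀ θ, IsUnit (R11 θ))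
    (θ₀ : ℝ)
    (X : Matrix (Fin s) (Fin s) ℝ) (N : Matrix (Fin s) (Fin l) ℝ)
    (Y : Matrix (Fin k) (Fin s) ℝ) (V : Matrix (Fin k) (Fin l) ℝ)
    (hXNYV : Q θ₀ * A' θ₀ = Matrix.fromBlocks X N Y V)
    (R12' : Matrix (Fin s) (Fin l) ℝ)
    (hR12' : ∀ i j, HasDerivAt (fun t => R12 t i j) (R12' i j) θ₀) :
    R12' = ((strictLowerPart (X * (R11 θ₀)⁻¹))ᵀ - strictLowerPart (X * (R11 θ₀)⁻¹)) * R12 θ₀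
      + ((R11 θ₀)⁻¹)ᵀ * Yᵀ * R22 θ₀ + N := by
  haveI : Invertible (R11 θ₀) := (hinv θ₀).invertible
  have hQQ : (Q θ₀)ᵀ * Q θ₀ = 1 := mul_eq_one_comm.mp (hQorth θ₀)
  set M' : Matrix (Fin s ⊕ Fin k) (Fin s ⊕ Fin l) ℝ :=
    Q' θ₀ * A θ₀ + Q θ₀ * A' θ₀ with hM'def
  have hQA : ∀ i j, HasDerivAt (fun t => (Q t * A t) i j) (M' i j) θ₀ :=
    hasDerivAt_matrix_mul_s6 Q Q' A A' θ₀ (fun i j => hQ θ₀ i j) (fun i j => hA θ₀ i j)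
  -- Ω := Q' Qᵀ is skew
  set Ω : Matrix (Fin s ⊕ Fin k) (Fin s ⊕ Fin k) ℝ := Q' θ₀ * (Q θ₀)ᵀ with hΩdef
  have hskew : Ω + Ωᵀ = 0 := by
    have h1 : ∀ i j, HasDerivAt (fun t => (Q t * (Q t)ᵀ) i j)
        ((Q' θ₀ * (Q θ₀)ᵀ + Q θ₀ * (Q' θ₀)ᵀ) i j) θ₀ := by
      intro i j
      have := hasDerivAt_matrix_mul_s6 Q Q' (fun t => (Q t)ᵀ) (fun t => (Q' t)ᵀ) θ₀
        (fun i j => hQ θ₀ i j) (fun i j => hQ θ₀ j i) i j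
      exact this
    ext i j
    have hconst : HasDerivAt (fun t => (Q t * (Q t)ᵀ) i j) 0 θ₀ := by
      have : (fun t => (Q t * (Q t)ᵀ) i j) = fun _ => (1 : Matrix _ _ ℝ) i j := by
        funext t; rw [hQorth t]
      rw [this]; exact hasDerivAt_const _ _
    have h := (h1 i j).unique hconst
    have e : (Q θ₀ * (Q' θ₀)ᵀ) i j = Ω j i := by
      simp [Matrix.mul_apply, Matrix.transpose_apply, hΩdef, mul_comm]
    rw [Matrix.add_apply, e] at h
    simpa [Matrix.add_apply, Matrix.transpose_apply, Matrix.zero_apply] using h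
  -- M' = Ω * (Q A) + Q A'
  have hM' : M' = Ω * Matrix.fromBlocks (R11 θ₀) (R12 θ₀) 0 (R22 θ₀)
      + Matrix.fromBlocks X N Y V := by
    rw [hM'def, hXNYV, ← hblock θ₀, hΩdef]
    congr 1
    rw [Matrix.mul_assoc, ← Matrix.mul_assoc (Q θ₀)ᵀ, hQQ, Matrix.one_mul]
  set Ω11 := Ω.toBlocks₁₁ with hΩ11
  set Ω12 := Ω.toBlocks₁₂ with hΩ12
  set Ω21 := Ω.toBlocks₂₁ with hΩ21
  set Ω22 := Ω.toBlocks₂₂ with hΩ22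
  have hΩblocks : Ω = Matrix.fromBlocks Ω11 Ω12 Ω21 Ω22 := (Matrix.fromBlocks_toBlocks Ω).symm
  have hM'blocks : M' = Matrix.fromBlocks (Ω11 * R11 θ₀ + X) (Ω11 * R12 θ₀ + Ω12 * R22 θ₀ + N)
      (Ω21 * R11 θ₀ + Y) (Ω21 * R12 θ₀ + Ω22 * R22 θ₀ + V) := by
    rw [hM', hΩblocks, Matrix.fromBlocks_multiply, Matrix.fromBlocks_add]
    simp [Matrix.mul_zero]
  -- block (2,1) of M' is zero
  have h21 : Ω21 * R11 θ₀ + Y = 0 := by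
    ext i j
    have hconst : HasDerivAt (fun t => (Q t * A t) (Sum.inr i) (Sum.inl j)) 0 θ₀ := by
      have : (fun t => (Q t * A t) (Sum.inr i) (Sum.inl j)) = fun _ => (0 : ℝ) := by
        funext t; rw [hblock t]; simp [Matrix.fromBlocks]
      rw [this]; exact hasDerivAt_const _ _
    have := (hQA (Sum.inr i) (Sum.inl j)).unique hconst
    rw [hM'blocks] at this
    simpa [Matrix.fromBlocks] using this
  -- block (1,2) of M' is R12'
  have h12 : R12' = Ω11 * R12 θ₀ + Ω12 * R22 θ₀ + N := by
    ext i j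
    have hd : HasDerivAt (fun t => (Q t * A t) (Sum.inl i) (Sum.inr j)) (R12' i j) θ₀ := by
      have : (fun t => (Q t * A t) (Sum.inl i) (Sum.inr j)) = fun t => R12 t i j := by
        funext t; rw [hblock t]; simp [Matrix.fromBlocks]
      rw [this]; exact hR12' i j
    have := (hQA (Sum.inl i) (Sum.inr j)).unique hd
    rw [hM'blocks] at this
    simpa [Matrix.fromBlocks] using this.symm
  -- block (1,1) of M' is the derivative R11', which is upper triangular
  set R11' : Matrix (Fin s) (Fin s) ℝ := Ω11 * R11 θ₀ + X with hR11'def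
  have hR11'deriv : ∀ i j : Fin s, HasDerivAt (fun t => R11 t i j) (R11' i j) θ₀ := by
    intro i j
    have h : (fun t => R11 t i j) = fun t => (Q t * A t) (Sum.inl i) (Sum.inl j) := by
      funext t; rw [hblock t]; simp [Matrix.fromBlocks]
    rw [h]
    have := hQA (Sum.inl i) (Sum.inl j)
    rw [hM'blocks] at this
    simpa [Matrix.fromBlocks] using this
  have hR11'upp : ∀ i j : Fin s, j < i → R11' i j = 0 := by
    intro i j hij
    have hconst : HasDerivAt (fun t => R11 t i j) 0 θ₀ := by
      have : (fun t => R11 t i j) = fun _ => (0 : ℝ) := by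
        funext t; exact hupp t i j hij
      rw [this]; exact hasDerivAt_const _ _
    exact (hR11'deriv i j).unique hconst
  -- inverse of R11 is upper triangular
  have hR11bt : (R11 θ₀).BlockTriangular id := fun i j hij => hupp θ₀ i j hij
  have hinvbt : ((R11 θ₀)⁻¹).BlockTriangular id :=
    Matrix.blockTriangular_inv_of_blockTriangular hR11bt
  have hUbt : (R11' * (R11 θ₀)⁻¹).BlockTriangular id :=
    Matrix.BlockTriangular.mul (fun i j hij => hR11'upp i j hij) hinvbt
  -- X * R11⁻¹ = R11' * R11⁻¹ - Ω11
  have hXinv : X * (R11 θ₀)⁻¹ = R11' * (R11 θ₀)⁻¹ - Ω11 := by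
    have hX : X = R11' - Ω11 * R11 θ₀ := by rw [hR11'def]; abel
    rw [hX, Matrix.sub_mul, Matrix.mul_assoc,
      Matrix.mul_nonsing_inv _ ((Matrix.isUnit_iff_isUnit_det _).mp (hinv θ₀)),
      Matrix.mul_one]
  -- Ω11 is skew
  have hΩ11skew : ∀ i j : Fin s, Ω11 i j + Ω11 j i = 0 := by
    intro i j
    have := congrFun (congrFun hskew (Sum.inl i)) (Sum.inl j)
    simpa [hΩ11, Matrix.toBlocks₁₁] using this
  -- Ω12 = (R11⁻¹)ᵀ * Yᵀ
  have hΩ21eq : Ω21 = -(Y * (R11 θ₀)⁻¹) := by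
    have h : Ω21 * R11 θ₀ = -Y := eq_neg_of_add_eq_zero_left h21
    calc Ω21 = Ω21 * R11 θ₀ * (R11 θ₀)⁻¹ := by
          rw [Matrix.mul_assoc,
            Matrix.mul_nonsing_inv _ ((Matrix.isUnit_iff_isUnit_det _).mp (hinv θ₀)),
            Matrix.mul_one]
      _ = -(Y * (R11 θ₀)⁻¹) := by rw [h, Matrix.neg_mul]
  have hΩ12eq : Ω12 = ((R11 θ₀)⁻¹)ᵀ * Yᵀ := by
    have h : Ω12 = -Ω21ᵀ := by
      ext i j
      have := congrFun (congrFun hskew (Sum.inl i)) (Sum.inr j)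
      simp only [Matrix.add_apply, Matrix.transpose_apply, Matrix.zero_apply] at this
      simp only [Matrix.neg_apply, Matrix.transpose_apply, hΩ12, hΩ21,
        Matrix.toBlocks₁₂, Matrix.toBlocks₂₁, Matrix.of_apply]
      linarith
    rw [h, hΩ21eq, Matrix.transpose_neg, neg_neg, Matrix.transpose_mul]
  -- Ω11 = Lᵀ - L
  set L := strictLowerPart (X * (R11 θ₀)⁻¹) with hL
  have hΩ11eq : Ω11 = Lᵀ - L := by
    have hLval : ∀ i j : Fin s, j < i → L i j = -Ω11 i j := by
      intro i j hij
      have h1 : (X * (R11 θ₀)⁻¹) i j = -Ω11 i j := by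
        have := congrFun (congrFun hXinv i) j
        rw [this, Matrix.sub_apply, hUbt hij, zero_sub]
      simp [hL, strictLowerPart, hij, h1]
    ext i j
    rcases lt_trichotomy i j with h | h | h
    · have h1 : L j i = -Ω11 j i := hLval j i h
      have h2 : L i j = 0 := by simp [hL, strictLowerPart, not_lt.mpr h.le]
      have h3 := hΩ11skew i j
      simp only [Matrix.sub_apply, Matrix.transpose_apply, h1, h2]
      linarith
    · subst h
      have h2 : L i i = 0 := by simp [hL, strictLowerPart]
      have h3 := hΩ11skew i i
      simp only [Matrix.sub_apply, Matrix.transpose_apply, h2]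
      linarith
    · have h1 : L i j = -Ω11 i j := hLval i j h
      have h2 : L j i = 0 := by simp [hL, strictLowerPart, not_lt.mpr h.le]
      simp only [Matrix.sub_apply, Matrix.transpose_apply, h1, h2]
      ring
  rw [h12, hΩ11eq, hΩ12eq, Matrix.mul_assoc]
end

section
/- In the upper-triangular array setting, the top-left s×s block of the skew-symmetric matrix Q'(θ₀) · Q(θ₀)ᵀ (the block formed by the first s rows and first s columns) equals 𝓛ᵀ − 𝓛, where 𝓛 is the strictly lower-triangular part of X · R11(θ₀)⁻¹. -/
open Matrix

/-- Upper triangular array case: the top-left `s × s` block of the skew-symmetric matrix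
`Q' θ₀ * (Q θ₀)ᵀ` equals `𝓛ᵀ − 𝓛`, where `𝓛` is the strictly lower-triangular part of
`X * (R11 θ₀)⁻¹`. -/
theorem upperTriangularCase_block11_of_skew
    (s k l : ℕ) (hs : 0 < s)
    (A A' : ℝ → Matrix (Fin s ⊕ Fin k) (Fin s ⊕ Fin l) ℝ)
    (Q Q' : ℝ → Matrix (Fin s ⊕ Fin k) (Fin s ⊕ Fin k) ℝ)
    (hA : ∀ θ i j, HasDerivAt (fun t => A t i j) (A' θ i j) θ)
    (hQ : ∀ θ i j, HasDerivAt (fun t => Q t i j) (Q' θ i j) θ)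
    (hQorth : ∀ θ, Q θ * (Q θ)ᵀ = 1)
    (R11 : ℝ → Matrix (Fin s) (Fin s) ℝ)
    (R12 : ℝ → Matrix (Fin s) (Fin l) ℝ)
    (R22 : ℝ → Matrix (Fin k) (Fin l) ℝ)
    (hblock : ∀ θ, Q θ * A θ = Matrix.fromBlocks (R11 θ) (R12 θ) 0 (R22 θ))
    (hupp : ∀ θ (i j : Fin s), j < i → R11 θ i j = 0)
    (hinv : ∀ θ, IsUnit (R11 θ))
    (θ₀ : ℝ)
    (X : Matrix (Fin s) (Fin s) ℝ) (N : Matrix (Fin s) (Fin l) ℝ)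
    (Y : Matrix (Fin k) (Fin s) ℝ) (V : Matrix (Fin k) (Fin l) ℝ)
    (hXNYV : Q θ₀ * A' θ₀ = Matrix.fromBlocks X N Y V) :
    (Q' θ₀ * (Q θ₀)ᵀ).toBlocks₁₁
      = (strictLowerPart (X * (R11 θ₀)⁻¹))ᵀ - strictLowerPart (X * (R11 θ₀)⁻¹) := by
  classical
  set S := Q' θ₀ * (Q θ₀)ᵀ with hSdef
  -- skew symmetry of S
  have hQQT : ∀ a b, HasDerivAt (fun t => (Q t * (Q t)ᵀ) a b)
      ((Q' θ₀ * (Q θ₀)ᵀ + Q θ₀ * (Q' θ₀)ᵀ) a b) θ₀ := by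
    intro a b
    have heq : (fun t => (Q t * (Q t)ᵀ) a b) = fun t => ∑ m, Q t a m * Q t b m := by
      funext t; simp [Matrix.mul_apply]
    rw [heq]
    have h := HasDerivAt.fun_sum (u := Finset.univ)
      (fun m _ => (hQ θ₀ a m).mul (hQ θ₀ b m))
    refine h.congr_deriv ?_
    simp [Matrix.mul_apply, Finset.sum_add_distrib]
  have hskew : ∀ a b, S a b + S b a = 0 := by
    intro a b
    have hconst : HasDerivAt (fun t => (Q t * (Q t)ᵀ) a b) 0 θ₀ := by
      have : (fun t => (Q t * (Q t)ᵀ) a b) = fun _ => (1 : Matrix _ _ ℝ) a b := by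
        funext t; rw [hQorth t]
      rw [this]; exact hasDerivAt_const _ _
    have h0 := (hQQT a b).unique hconst
    have h2 : (Q θ₀ * (Q' θ₀)ᵀ) a b = (Q' θ₀ * (Q θ₀)ᵀ) b a := by
      simp [Matrix.mul_apply, mul_comm]
    rw [Matrix.add_apply, h2] at h0
    simpa [hSdef] using h0
  -- derivative of entries of Q t * A t
  set D := Q' θ₀ * A θ₀ + Q θ₀ * A' θ₀ with hDdef
  have hQA : ∀ a b, HasDerivAt (fun t => (Q t * A t) a b) (D a b) θ₀ := by
    intro a b
    have heq : (fun t => (Q t * A t) a b) = fun t => ∑ m, Q t a m * A t m b := by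
      funext t; simp [Matrix.mul_apply]
    rw [heq]
    have h := HasDerivAt.fun_sum (u := Finset.univ)
      (fun m _ => (hQ θ₀ a m).mul (hA θ₀ m b))
    refine h.congr_deriv ?_
    simp [hDdef, Matrix.mul_apply, Finset.sum_add_distrib]
  -- below-diagonal entries of top-left block of D vanish
  have hDtri : BlockTriangular (D.toBlocks₁₁) (id : Fin s → Fin s) := by
    intro i j hij
    have hconst : HasDerivAt (fun t => (Q t * A t) (Sum.inl i) (Sum.inl j)) 0 θ₀ := by
      have : (fun t => (Q t * A t) (Sum.inl i) (Sum.inl j)) = fun _ => (0 : ℝ) := by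
        funext t; rw [hblock t]
        simp [Matrix.fromBlocks, hupp t i j hij]
      rw [this]; exact hasDerivAt_const _ _
    exact (hQA (Sum.inl i) (Sum.inl j)).unique hconst
  -- Q'A = S * (QA)
  have hQtQ : (Q θ₀)ᵀ * Q θ₀ = 1 := mul_eq_one_comm.mp (hQorth θ₀)
  have hQ'A : Q' θ₀ * A θ₀ = S * (Q θ₀ * A θ₀) := by
    rw [hSdef, Matrix.mul_assoc, ← Matrix.mul_assoc (Q θ₀)ᵀ, hQtQ, Matrix.one_mul]
  -- block equation for D₁₁
  have hDblock : D = Matrix.fromBlocks S.toBlocks₁₁ S.toBlocks₁₂ S.toBlocks₂₁ S.toBlocks₂₂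
      * Matrix.fromBlocks (R11 θ₀) (R12 θ₀) 0 (R22 θ₀) + Matrix.fromBlocks X N Y V := by
    rw [Matrix.fromBlocks_toBlocks, hDdef, hQ'A, hblock θ₀, hXNYV]
  have hD11 : D.toBlocks₁₁ = S.toBlocks₁₁ * R11 θ₀ + X := by
    rw [hDblock, Matrix.fromBlocks_multiply]
    ext i j
    simp [Matrix.toBlocks₁₁, Matrix.fromBlocks]
  -- solve for S₁₁
  have hdet : IsUnit (R11 θ₀).det := (Matrix.isUnit_iff_isUnit_det _).mp (hinv θ₀)
  have hS11 : S.toBlocks₁₁ = (D.toBlocks₁₁ - X) * (R11 θ₀)⁻¹ := by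
    have h1 : S.toBlocks₁₁ * R11 θ₀ = D.toBlocks₁₁ - X := by
      rw [hD11, add_sub_cancel_right]
    rw [← h1, Matrix.mul_assoc, Matrix.mul_nonsing_inv _ hdet, Matrix.mul_one]
  -- triangularity of D₁₁ * R11⁻¹
  haveI : Invertible (R11 θ₀) := (hinv θ₀).invertible
  have hR11tri : BlockTriangular (R11 θ₀) (id : Fin s → Fin s) := fun i j hij => hupp θ₀ i j hij
  have hRinvtri : BlockTriangular (R11 θ₀)⁻¹ (id : Fin s → Fin s) :=
    Matrix.blockTriangular_inv_of_blockTriangular hR11tri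
  have hTtri : BlockTriangular (D.toBlocks₁₁ * (R11 θ₀)⁻¹) (id : Fin s → Fin s) :=
    hDtri.mul hRinvtri
  -- entrywise: below-diagonal entries of S₁₁
  have hlow : ∀ i j : Fin s, j < i → S.toBlocks₁₁ i j = -(X * (R11 θ₀)⁻¹) i j := by
    intro i j hij
    rw [hS11, Matrix.sub_mul, Matrix.sub_apply, hTtri hij, zero_sub]
  have hS11skew : ∀ i j : Fin s, S.toBlocks₁₁ i j + S.toBlocks₁₁ j i = 0 := by
    intro i j; exact hskew (Sum.inl i) (Sum.inl j)
  ext i j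
  rcases lt_trichotomy i j with hij | hij | hij
  · have h1 : S.toBlocks₁₁ i j = -S.toBlocks₁₁ j i := by
      have := hS11skew i j; linarith
    rw [h1, hlow j i hij]
    simp [strictLowerPart, Matrix.sub_apply, hij, not_lt.mpr hij.le]
  · subst hij
    have h0 : S.toBlocks₁₁ i i = 0 := by have := hS11skew i i; linarith
    simp [h0, strictLowerPart, Matrix.sub_apply]
  · rw [hlow i j hij]
    simp [strictLowerPart, Matrix.sub_apply, hij, not_lt.mpr hij.le]
end

section
/- In the upper-triangular array setting, the bottom-left k×s block of Q'(θ₀) · Q(θ₀)ᵀ (the block formed by the last k rows and the first s columns) equals −Y · R11(θ₀)⁻¹. -/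
open Matrix

/-- Upper triangular array case: the bottom-left `k × s` block of `Q' θ₀ * (Q θ₀)ᵀ`
equals `−Y * (R11 θ₀)⁻¹`. -/
theorem upperTriangularCase_block21_of_skew
    (s k l : ℕ) (hs : 0 < s)
    (A A' : ℝ → Matrix (Fin s ⊕ Fin k) (Fin s ⊕ Fin l) ℝ)
    (Q Q' : ℝ → Matrix (Fin s ⊕ Fin k) (Fin s ⊕ Fin k) ℝ)
    (hA : ∀ θ i j, HasDerivAt (fun t => A t i j) (A' θ i j) θ)
    (hQ : ∀ θ i j, HasDerivAt (fun t => Q t i j) (Q' θ i j) θ)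
    (hQorth : ∀ θ, Q θ * (Q θ)ᵀ = 1)
    (R11 : ℝ → Matrix (Fin s) (Fin s) ℝ)
    (R12 : ℝ → Matrix (Fin s) (Fin l) ℝ)
    (R22 : ℝ → Matrix (Fin k) (Fin l) ℝ)
    (hblock : ∀ θ, Q θ * A θ = Matrix.fromBlocks (R11 θ) (R12 θ) 0 (R22 θ))
    (hupp : ∀ θ (i j : Fin s), j < i → R11 θ i j = 0)
    (hinv : ∀ θ, IsUnit (R11 θ))
    (θ₀ : ℝ)
    (X : Matrix (Fin s) (Fin s) ℝ) (N : Matrix (Fin s) (Fin l) ℝ)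
    (Y : Matrix (Fin k) (Fin s) ℝ) (V : Matrix (Fin k) (Fin l) ℝ)
    (hXNYV : Q θ₀ * A' θ₀ = Matrix.fromBlocks X N Y V) :
    (Q' θ₀ * (Q θ₀)ᵀ).toBlocks₂₁ = -(Y * (R11 θ₀)⁻¹) := by

  have hQtQ : (Q θ₀)ᵀ * Q θ₀ = 1 := mul_eq_one_comm.mp (hQorth θ₀)
  -- derivative of the product
  have hderiv : ∀ i j, HasDerivAt (fun t => (Q t * A t) i j)
      ((Q' θ₀ * A θ₀ + Q θ₀ * A' θ₀) i j) θ₀ := by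
    intro i j
    simp only [Matrix.mul_apply, Matrix.add_apply]
    rw [← Finset.sum_add_distrib]
    exact HasDerivAt.fun_sum fun x _ => (hQ θ₀ i x).mul (hA θ₀ x j)
  have hzero : ∀ (i : Fin k) (j : Fin s),
      (Q' θ₀ * A θ₀ + Q θ₀ * A' θ₀) (Sum.inr i) (Sum.inl j) = 0 := by
    intro i j
    have h1 := hderiv (Sum.inr i) (Sum.inl j)
    have h2 : (fun t => (Q t * A t) (Sum.inr i) (Sum.inl j)) = fun _ => (0 : ℝ) := by
      funext t
      rw [hblock t]
      simp [Matrix.fromBlocks]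
    rw [h2] at h1
    exact h1.unique (hasDerivAt_const _ _)
  set B := Q' θ₀ * (Q θ₀)ᵀ with hB
  have hQ'A : Q' θ₀ * A θ₀ = B * (Q θ₀ * A θ₀) := by
    rw [hB, Matrix.mul_assoc, ← Matrix.mul_assoc ((Q θ₀)ᵀ), hQtQ, Matrix.one_mul]
  have hsum : B.toBlocks₂₁ * R11 θ₀ + Y = 0 := by
    ext i j
    have h := hzero i j
    rw [Matrix.add_apply, hQ'A, hblock θ₀, hXNYV] at h
    have hBblk : B = Matrix.fromBlocks B.toBlocks₁₁ B.toBlocks₁₂ B.toBlocks₂₁ B.toBlocks₂₂ :=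
      (Matrix.fromBlocks_toBlocks B).symm
    rw [hBblk, Matrix.fromBlocks_multiply] at h
    simpa using h
  have hdet : IsUnit (R11 θ₀).det := (Matrix.isUnit_iff_isUnit_det _).mp (hinv θ₀)
  have h3 : B.toBlocks₂₁ * R11 θ₀ = -Y := by
    have := hsum
    linear_combination (norm := noncomm_ring) this
  calc B.toBlocks₂₁ = B.toBlocks₂₁ * R11 θ₀ * (R11 θ₀)⁻¹ :=
        (Matrix.mul_nonsing_inv_cancel_right _ _ hdet).symm
    _ = -Y * (R11 θ₀)⁻¹ := by rw [h3]
    _ = -(Y * (R11 θ₀)⁻¹) := by rw [Matrix.neg_mul]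
end

section
/- In the square-root covariance filter array setting, the (1,1) block of the post-array factors the innovation covariance: Sᵀ · S = R + H · P · Hᵀ. -/
open Matrix

/-- Square-root covariance filter array: the (1,1) block of the post-array factors the
innovation covariance, `Sᵀ * S = R + H * P * Hᵀ` with `P = (P½)ᵀ * P½` and
`R = (R½)ᵀ * R½`. -/
theorem srcf_innovation_covariance_factor
    (n m q : ℕ) (hn : 0 < n) (hm : 0 < m) (hq : 0 < q)
    (F : Matrix (Fin n) (Fin n) ℝ) (H : Matrix (Fin m) (Fin n) ℝ)
    (G : Matrix (Fin n) (Fin q) ℝ)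
    (Psqrt : Matrix (Fin n) (Fin n) ℝ) (Rsqrt : Matrix (Fin m) (Fin m) ℝ)
    (Qwsqrt : Matrix (Fin q) (Fin q) ℝ)
    (Θ : Matrix ((Fin m ⊕ Fin n) ⊕ Fin q) ((Fin m ⊕ Fin n) ⊕ Fin q) ℝ)
    (hΘ : Θᵀ * Θ = 1)
    (S : Matrix (Fin m) (Fin m) ℝ) (T : Matrix (Fin m) (Fin n) ℝ)
    (M : Matrix (Fin n) (Fin n) ℝ)
    (harray : Θ * Matrix.fromRows
        (Matrix.fromRows (Matrix.fromCols Rsqrt 0)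
          (Matrix.fromCols (Psqrt * Hᵀ) (Psqrt * Fᵀ)))
        (Matrix.fromCols 0 (Qwsqrt * Gᵀ))
      = Matrix.fromRows
        (Matrix.fromRows (Matrix.fromCols S T) (Matrix.fromCols 0 M))
        (Matrix.fromCols 0 0)) :
    Sᵀ * S = Rsqrtᵀ * Rsqrt + H * (Psqrtᵀ * Psqrt) * Hᵀ := by
  set A := Matrix.fromRows
        (Matrix.fromRows (Matrix.fromCols Rsqrt 0)
          (Matrix.fromCols (Psqrt * Hᵀ) (Psqrt * Fᵀ)))
        (Matrix.fromCols 0 (Qwsqrt * Gᵀ)) with hA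
  set B := Matrix.fromRows
        (Matrix.fromRows (Matrix.fromCols S T) (Matrix.fromCols 0 M))
        (Matrix.fromCols 0 0) with hB
  have key : Aᵀ * A = Bᵀ * B := by
    calc Aᵀ * A = Aᵀ * (Θᵀ * Θ) * A := by rw [hΘ, Matrix.mul_one]
    _ = (Θ * A)ᵀ * (Θ * A) := by
        simp only [Matrix.transpose_mul, Matrix.mul_assoc]
    _ = Bᵀ * B := by rw [harray]
  rw [hA, hB] at key
  simp only [Matrix.transpose_fromRows, Matrix.transpose_fromCols,
    Matrix.fromCols_mul_fromRows, Matrix.fromRows_mul_fromCols,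
    Matrix.transpose_zero, Matrix.transpose_mul, Matrix.fromBlocks_add,
    Matrix.fromBlocks_inj] at key
  obtain ⟨h11, -, -, -⟩ := key
  simp only [Matrix.zero_mul, Matrix.mul_zero, add_zero, zero_add] at h11
  rw [← h11, Matrix.transpose_transpose]
  simp only [Matrix.mul_assoc]
end

section
/- In the square-root covariance filter array setting, the (1,2) block of the post-array encodes the normalized Kalman gain: Sᵀ · T = H · P · Fᵀ; in particular, if S is invertible then Tᵀ = F · P · Hᵀ · S⁻¹. -/
open Matrix

/-- Square-root covariance filter array: the (1,2) block of the post-array encodes the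
normalized Kalman gain, `Sᵀ * T = H * P * Fᵀ`; in particular, if `S` is invertible then
`Tᵀ = F * P * Hᵀ * S⁻¹`. -/
theorem srcf_normalized_gain
    (n m q : ℕ) (hn : 0 < n) (hm : 0 < m) (hq : 0 < q)
    (F : Matrix (Fin n) (Fin n) ℝ) (H : Matrix (Fin m) (Fin n) ℝ)
    (G : Matrix (Fin n) (Fin q) ℝ)
    (Psqrt : Matrix (Fin n) (Fin n) ℝ) (Rsqrt : Matrix (Fin m) (Fin m) ℝ)
    (Qwsqrt : Matrix (Fin q) (Fin q) ℝ)
    (Θ : Matrix ((Fin m ⊕ Fin n) ⊕ Fin q) ((Fin m ⊕ Fin n) ⊕ Fin q) ℝ)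
    (hΘ : Θᵀ * Θ = 1)
    (S : Matrix (Fin m) (Fin m) ℝ) (T : Matrix (Fin m) (Fin n) ℝ)
    (M : Matrix (Fin n) (Fin n) ℝ)
    (harray : Θ * Matrix.fromRows
        (Matrix.fromRows (Matrix.fromCols Rsqrt 0)
          (Matrix.fromCols (Psqrt * Hᵀ) (Psqrt * Fᵀ)))
        (Matrix.fromCols 0 (Qwsqrt * Gᵀ))
      = Matrix.fromRows
        (Matrix.fromRows (Matrix.fromCols S T) (Matrix.fromCols 0 M))
        (Matrix.fromCols 0 0)) :
    Sᵀ * T = H * (Psqrtᵀ * Psqrt) * Fᵀ ∧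
      (IsUnit S → Tᵀ = F * (Psqrtᵀ * Psqrt) * Hᵀ * S⁻¹) := by
  set A := Matrix.fromRows
      (Matrix.fromRows (Matrix.fromCols Rsqrt 0)
        (Matrix.fromCols (Psqrt * Hᵀ) (Psqrt * Fᵀ)))
      (Matrix.fromCols 0 (Qwsqrt * Gᵀ)) with hA
  set B := Matrix.fromRows
      (Matrix.fromRows (Matrix.fromCols S T) (Matrix.fromCols 0 M))
      (Matrix.fromCols 0 0) with hB
  have key : Aᵀ * A = Bᵀ * B := by
    calc Aᵀ * A = Aᵀ * (Θᵀ * Θ) * A := by rw [hΘ]; rw [Matrix.mul_one]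
    _ = (Θ * A)ᵀ * (Θ * A) := by
        rw [Matrix.transpose_mul]; rw [Matrix.mul_assoc, Matrix.mul_assoc, Matrix.mul_assoc]
    _ = Bᵀ * B := by rw [harray]
  rw [hA, hB] at key
  simp only [transpose_fromRows, transpose_fromCols, transpose_mul, transpose_zero,
    fromCols_mul_fromRows, fromRows_mul_fromCols, Matrix.mul_zero, Matrix.zero_mul,
    fromBlocks_add, add_zero, zero_add] at key
  have h12 : Sᵀ * T = H * (Psqrtᵀ * Psqrt) * Fᵀ := by
    have := congrArg Matrix.toBlocks₁₂ key
    simp only [toBlocks_fromBlocks₁₂] at this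
    rw [← this]
    simp [Matrix.transpose_transpose, Matrix.mul_assoc]
  refine ⟨h12, fun hS => ?_⟩
  have h21 : Tᵀ * S = F * (Psqrtᵀ * Psqrt) * Hᵀ := by
    have := congrArg Matrix.transpose h12
    simpa [Matrix.transpose_mul, Matrix.mul_assoc] using this
  have hdet : IsUnit S.det := (Matrix.isUnit_iff_isUnit_det S).mp hS
  calc Tᵀ = Tᵀ * S * S⁻¹ := by rw [Matrix.mul_assoc, Matrix.mul_nonsing_inv S hdet, Matrix.mul_one]
  _ = F * (Psqrtᵀ * Psqrt) * Hᵀ * S⁻¹ := by rw [h21]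
end

section
/- In the square-root covariance filter array setting, the (2,2) block of the post-array satisfies the factored Riccati difference equation: Mᵀ · M = F · P · Fᵀ + G · Qw · Gᵀ − Tᵀ · T; equivalently Tᵀ · T + Mᵀ · M = F · P · Fᵀ + G · Qw · Gᵀ. -/
open Matrix

/-- Square-root covariance filter array: the (2,2) block of the post-array satisfies the
factored Riccati difference equation `Mᵀ * M = F * P * Fᵀ + G * Qw * Gᵀ − Tᵀ * T`,
equivalently `Tᵀ * T + Mᵀ * M = F * P * Fᵀ + G * Qw * Gᵀ`. -/
theorem srcf_riccati_factor
    (n m q : ℕ) (hn : 0 < n) (hm : 0 < m) (hq : 0 < q)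
    (F : Matrix (Fin n) (Fin n) ℝ) (H : Matrix (Fin m) (Fin n) ℝ)
    (G : Matrix (Fin n) (Fin q) ℝ)
    (Psqrt : Matrix (Fin n) (Fin n) ℝ) (Rsqrt : Matrix (Fin m) (Fin m) ℝ)
    (Qwsqrt : Matrix (Fin q) (Fin q) ℝ)
    (Θ : Matrix ((Fin m ⊕ Fin n) ⊕ Fin q) ((Fin m ⊕ Fin n) ⊕ Fin q) ℝ)
    (hΘ : Θᵀ * Θ = 1)
    (S : Matrix (Fin m) (Fin m) ℝ) (T : Matrix (Fin m) (Fin n) ℝ)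
    (M : Matrix (Fin n) (Fin n) ℝ)
    (harray : Θ * Matrix.fromRows
        (Matrix.fromRows (Matrix.fromCols Rsqrt 0)
          (Matrix.fromCols (Psqrt * Hᵀ) (Psqrt * Fᵀ)))
        (Matrix.fromCols 0 (Qwsqrt * Gᵀ))
      = Matrix.fromRows
        (Matrix.fromRows (Matrix.fromCols S T) (Matrix.fromCols 0 M))
        (Matrix.fromCols 0 0)) :
    Mᵀ * M = F * (Psqrtᵀ * Psqrt) * Fᵀ + G * (Qwsqrtᵀ * Qwsqrt) * Gᵀ - Tᵀ * T ∧
      Tᵀ * T + Mᵀ * M = F * (Psqrtᵀ * Psqrt) * Fᵀ + G * (Qwsqrtᵀ * Qwsqrt) * Gᵀ := by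
  set A := Matrix.fromRows
        (Matrix.fromRows (Matrix.fromCols Rsqrt 0)
          (Matrix.fromCols (Psqrt * Hᵀ) (Psqrt * Fᵀ)))
        (Matrix.fromCols 0 (Qwsqrt * Gᵀ)) with hA
  set B := Matrix.fromRows
        (Matrix.fromRows (Matrix.fromCols S T) (Matrix.fromCols 0 M))
        (Matrix.fromCols 0 0) with hB
  have key : Aᵀ * A = Bᵀ * B := by
    calc Aᵀ * A = Aᵀ * (Θᵀ * Θ) * A := by rw [hΘ]; simp [Matrix.mul_assoc]
    _ = (Θ * A)ᵀ * (Θ * A) := by simp [Matrix.transpose_mul, Matrix.mul_assoc]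
    _ = Bᵀ * B := by rw [harray]
  rw [hA, hB] at key
  simp only [transpose_fromRows, transpose_fromCols, fromCols_mul_fromRows,
    fromRows_mul_fromCols, transpose_zero, transpose_mul, fromBlocks_add] at key
  have h22 := congrArg Matrix.toBlocks₂₂ key
  simp only [toBlocks_fromBlocks₂₂, Matrix.mul_zero, Matrix.zero_mul, add_zero, zero_add,
    transpose_transpose, Matrix.mul_assoc] at h22
  refine ⟨?_, ?_⟩
  · rw [eq_sub_iff_add_eq, add_comm, ← h22]; simp [Matrix.mul_assoc]
  · rw [← h22]; simp [Matrix.mul_assoc]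
end

section
/- In the extended square-root covariance filter array setting (with the extra data column), if R½ and P½ are invertible, then the post-array vector blocks satisfy the normalized innovation and state-update equations: Sᵀ · ē = z − H · x̂ and Mᵀ · w = F · x̂ + Tᵀ · ē. -/
open Matrix

lemma fromRows_add' {R : Type*} [AddCommMonoid R] {m₁ m₂ n : Type*}
    (A₁ C₁ : Matrix m₁ n R) (A₂ C₂ : Matrix m₂ n R) :
    Matrix.fromRows A₁ A₂ + Matrix.fromRows C₁ C₂
      = Matrix.fromRows (A₁ + C₁) (A₂ + C₂) := by
  ext (i | i) j <;> simp [Matrix.fromRows_apply_inl, Matrix.fromRows_apply_inr]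

/-- Extended square-root covariance filter array: if `R½` and `P½` are invertible, the
post-array vector blocks satisfy the normalized innovation and state-update equations
`Sᵀ * ē = z − H * x̂` and `Mᵀ * w = F * x̂ + Tᵀ * ē`.  Vectors are represented as
single-column matrices. -/
theorem esrcf_innovation_and_state_update
    (n m q : ℕ) (hn : 0 < n) (hm : 0 < m) (hq : 0 < q)
    (F : Matrix (Fin n) (Fin n) ℝ) (H : Matrix (Fin m) (Fin n) ℝ)
    (G : Matrix (Fin n) (Fin q) ℝ)
    (Psqrt : Matrix (Fin n) (Fin n) ℝ) (Rsqrt : Matrix (Fin m) (Fin m) ℝ)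
    (Qwsqrt : Matrix (Fin q) (Fin q) ℝ)
    (hRsqrt : IsUnit Rsqrt) (hPsqrt : IsUnit Psqrt)
    (z : Matrix (Fin m) (Fin 1) ℝ) (xhat : Matrix (Fin n) (Fin 1) ℝ)
    (Θ : Matrix ((Fin m ⊕ Fin n) ⊕ Fin q) ((Fin m ⊕ Fin n) ⊕ Fin q) ℝ)
    (hΘ : Θᵀ * Θ = 1)
    (S : Matrix (Fin m) (Fin m) ℝ) (T : Matrix (Fin m) (Fin n) ℝ)
    (M : Matrix (Fin n) (Fin n) ℝ)
    (ebar : Matrix (Fin m) (Fin 1) ℝ) (w : Matrix (Fin n) (Fin 1) ℝ)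
    (γ : Matrix (Fin q) (Fin 1) ℝ)
    (harray : Θ * Matrix.fromCols
        (Matrix.fromRows
          (Matrix.fromRows (Matrix.fromCols Rsqrt 0)
            (Matrix.fromCols (Psqrt * Hᵀ) (Psqrt * Fᵀ)))
          (Matrix.fromCols 0 (Qwsqrt * Gᵀ)))
        (Matrix.fromRows
          (Matrix.fromRows (-((Rsqrtᵀ)⁻¹ * z)) ((Psqrtᵀ)⁻¹ * xhat)) 0)
      = Matrix.fromCols
        (Matrix.fromRows
          (Matrix.fromRows (Matrix.fromCols S T) (Matrix.fromCols 0 M))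
          (Matrix.fromCols 0 0))
        (Matrix.fromRows (Matrix.fromRows (-ebar) w) γ)) :
    Sᵀ * ebar = z - H * xhat ∧ Mᵀ * w = F * xhat + Tᵀ * ebar := by
  set L := Matrix.fromRows
          (Matrix.fromRows (Matrix.fromCols Rsqrt 0)
            (Matrix.fromCols (Psqrt * Hᵀ) (Psqrt * Fᵀ)))
          (Matrix.fromCols 0 (Qwsqrt * Gᵀ)) with hL
  set c := Matrix.fromRows
          (Matrix.fromRows (-((Rsqrtᵀ)⁻¹ * z)) ((Psqrtᵀ)⁻¹ * xhat)) 0 with hc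
  set L' := Matrix.fromRows
          (Matrix.fromRows (Matrix.fromCols S T) (Matrix.fromCols 0 M))
          (Matrix.fromCols 0 0) with hL'
  set c' := Matrix.fromRows (Matrix.fromRows (-ebar) w) γ with hc'
  have hRdet : IsUnit Rsqrtᵀ.det := by
    rw [Matrix.det_transpose]
    exact (Matrix.isUnit_iff_isUnit_det Rsqrt).mp hRsqrt
  have hPdet : IsUnit Psqrtᵀ.det := by
    rw [Matrix.det_transpose]
    exact (Matrix.isUnit_iff_isUnit_det Psqrt).mp hPsqrt
  have key : (Matrix.fromCols L c)ᵀ * Matrix.fromCols L c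
      = (Matrix.fromCols L' c')ᵀ * Matrix.fromCols L' c' := by
    calc (Matrix.fromCols L c)ᵀ * Matrix.fromCols L c
        = (Θ * Matrix.fromCols L c)ᵀ * (Θ * Matrix.fromCols L c) := by
          rw [Matrix.transpose_mul, Matrix.mul_assoc, ← Matrix.mul_assoc Θᵀ, hΘ, Matrix.one_mul]
      _ = (Matrix.fromCols L' c')ᵀ * Matrix.fromCols L' c' := by rw [harray]
  rw [Matrix.transpose_fromCols, Matrix.transpose_fromCols,
    Matrix.fromRows_mul_fromCols, Matrix.fromRows_mul_fromCols] at key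
  have cross : Lᵀ * c = L'ᵀ * c' := (Matrix.fromBlocks_inj.mp key).2.1
  have lhs : Lᵀ * c = Matrix.fromRows (-z + H * xhat) (F * xhat) := by
    rw [hL, hc, Matrix.transpose_fromRows, Matrix.transpose_fromRows,
      Matrix.fromCols_mul_fromRows, Matrix.fromCols_mul_fromRows,
      Matrix.transpose_fromCols, Matrix.transpose_fromCols,
      Matrix.fromRows_mul, Matrix.fromRows_mul, Matrix.mul_zero, fromRows_add',
      add_zero]
    have hR2 : Rsqrtᵀ * (Rsqrtᵀ⁻¹ * z) = z := by
      rw [← Matrix.mul_assoc, Matrix.mul_nonsing_inv _ hRdet, Matrix.one_mul]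
    have hP2 : (Psqrt * Hᵀ)ᵀ * (Psqrtᵀ⁻¹ * xhat) = H * xhat := by
      rw [Matrix.transpose_mul, Matrix.transpose_transpose, Matrix.mul_assoc,
        ← Matrix.mul_assoc Psqrtᵀ, Matrix.mul_nonsing_inv _ hPdet, Matrix.one_mul]
    have hP3 : (Psqrt * Fᵀ)ᵀ * (Psqrtᵀ⁻¹ * xhat) = F * xhat := by
      rw [Matrix.transpose_mul, Matrix.transpose_transpose, Matrix.mul_assoc,
        ← Matrix.mul_assoc Psqrtᵀ, Matrix.mul_nonsing_inv _ hPdet, Matrix.one_mul]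
    have hP0 : Psqrtᵀ * (Psqrtᵀ⁻¹ * xhat) = xhat := by
      rw [← Matrix.mul_assoc, Matrix.mul_nonsing_inv _ hPdet, Matrix.one_mul]
    simp [hR2, hP2, hP3, Matrix.mul_assoc, hP0]
  have rhs : L'ᵀ * c' = Matrix.fromRows (-(Sᵀ * ebar)) (Tᵀ * (-ebar) + Mᵀ * w) := by
    rw [hL', hc', Matrix.transpose_fromRows, Matrix.transpose_fromRows,
      Matrix.fromCols_mul_fromRows, Matrix.fromCols_mul_fromRows,
      Matrix.transpose_fromCols, Matrix.transpose_fromCols,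
      Matrix.transpose_fromCols, Matrix.fromRows_mul, Matrix.fromRows_mul,
      Matrix.fromRows_mul]
    simp [fromRows_add']
  rw [lhs, rhs] at cross
  obtain ⟨h1, h2⟩ := Matrix.fromRows_inj cross
  constructor
  · have := congrArg Neg.neg h1
    rw [neg_neg, neg_add, neg_neg, ← sub_eq_add_neg] at this
    rw [this]
  · have : Mᵀ * w = F * xhat - Tᵀ * (-ebar) := by
      rw [h2]; abel
    rw [this, Matrix.mul_neg, sub_neg_eq_add]
end
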